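/- Let X be a real-valued square-integrable random variable that is not almost surely constant, and let α > β > 0. Every minimizer t of the expectile-loss risk φ(t) = E[α·(max(X − t, 0))² + β·(max(t − X, 0))²] satisfies the strict inequality t > E[X]. -/

import Mathlib

open MeasureTheory

lemma expectile_pt_ineq (α β h x t : ℝ) (_hβ : 0 < β) (hαβ : β < α) (hh : 0 < h) :
    α * (max (x - (t + h)) 0) ^ 2 + β * (max ((t + h) - x) 0) ^ 2 ≤
      (α * (max (x - t) 0) ^ 2 + β * (max (t - x) 0) ^ 2) + α * h ^ 2
        - 2 * β * h * (x - t) - 2 * (α - β) * h * (max (x - t) 0) := by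
  rcases le_total x t with h1 | h1
  · rw [max_eq_right (by linarith : x - t ≤ 0), max_eq_left (by linarith : 0 ≤ t - x),
      max_eq_right (by linarith : x - (t + h) ≤ 0), max_eq_left (by linarith : 0 ≤ t + h - x)]
    nlinarith [mul_nonneg (by linarith : (0:ℝ) ≤ α - β) (sq_nonneg h)]
  · rw [max_eq_left (by linarith : 0 ≤ x - t), max_eq_right (by linarith : t - x ≤ 0)]
    rcases le_total x (t + h) with h2 | h2
    · rw [max_eq_right (by linarith : x - (t + h) ≤ 0), max_eq_left (by linarith : 0 ≤ t + h - x)]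
      nlinarith [mul_nonneg (by linarith : (0:ℝ) ≤ α - β) (sq_nonneg (t + h - x))]
    · rw [max_eq_left (by linarith : 0 ≤ x - (t + h)), max_eq_right (by linarith : t + h - x ≤ 0)]
      nlinarith [sq_nonneg h]

/-- If X is not a.s. constant and α > β, every minimizer of the
expectile-loss risk satisfies t > E[X] strictly. -/
theorem expectile_risk_min_gt_mean
    {Ω : Type*} [MeasurableSpace Ω] (μ : Measure Ω) [IsProbabilityMeasure μ]
    (X : Ω → ℝ) (hX : MemLp X 2 μ)
    (hnc : ¬ ∃ k : ℝ, X =ᵐ[μ] fun _ => k)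
    (α β : ℝ) (hβ : 0 < β) (hαβ : β < α)
    (φ : ℝ → ℝ)
    (hφ : ∀ t, φ t = ∫ ω, (α * (max (X ω - t) 0) ^ 2 + β * (max (t - X ω) 0) ^ 2) ∂μ) :
    ∀ t : ℝ, (∀ s : ℝ, φ t ≤ φ s) → (∫ ω, X ω ∂μ) < t := by
  intro t ht
  by_contra hlt
  push_neg at hlt
  have hα : (0:ℝ) < α := lt_trans hβ hαβ
  set m := ∫ ω, X ω ∂μ with hm
  have hXm : AEStronglyMeasurable X μ := hX.aestronglyMeasurable
  have hX1 : Integrable X μ := hX.integrable one_le_two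
  have hsub : ∀ r : ℝ, Integrable (fun ω => X ω - r) μ := fun r => hX1.sub (integrable_const r)
  have hsq : ∀ r : ℝ, Integrable (fun ω => (X ω - r) ^ 2) μ := fun r =>
    (hX.sub (memLp_const r)).integrable_sq
  have hmeas : ∀ r : ℝ, AEStronglyMeasurable (fun ω => max (X ω - r) 0) μ := fun r =>
    (hXm.sub aestronglyMeasurable_const).sup aestronglyMeasurable_const
  have hmeas' : ∀ r : ℝ, AEStronglyMeasurable (fun ω => max (r - X ω) 0) μ := fun r =>
    (aestronglyMeasurable_const.sub hXm).sup aestronglyMeasurable_const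
  have habs : ∀ a : ℝ, |max a 0| ≤ |a| := by
    intro a
    rw [abs_of_nonneg (le_max_right a 0)]
    exact max_le (le_abs_self a) (abs_nonneg a)
  have hmax : ∀ r : ℝ, Integrable (fun ω => max (X ω - r) 0) μ := fun r =>
    (hsub r).mono (hmeas r) (ae_of_all _ fun ω => by
      simp only [Real.norm_eq_abs]; exact habs _)
  have hkeysq : ∀ a : ℝ, ‖(max a 0) ^ 2‖ ≤ ‖a ^ 2‖ := by
    intro a
    rw [Real.norm_eq_abs, Real.norm_eq_abs, abs_of_nonneg (sq_nonneg (max a 0)),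
      abs_of_nonneg (sq_nonneg a)]
    rcases le_total a 0 with h | h
    · rw [max_eq_right h]
      simpa using sq_nonneg a
    · rw [max_eq_left h]
  have hmaxsq : ∀ r : ℝ, Integrable (fun ω => (max (X ω - r) 0) ^ 2) μ := fun r =>
    (hsq r).mono ((hmeas r).pow 2) (ae_of_all _ fun ω => hkeysq _)
  have hmaxsq' : ∀ r : ℝ, Integrable (fun ω => (max (r - X ω) 0) ^ 2) μ := fun r =>
    (hsq r).mono ((hmeas' r).pow 2) (ae_of_all _ fun ω => by
      have e : (X ω - r) ^ 2 = (r - X ω) ^ 2 := by ring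
      rw [e]
      exact hkeysq _)
  have hφint : ∀ r : ℝ,
      Integrable (fun ω => α * (max (X ω - r) 0) ^ 2 + β * (max (r - X ω) 0) ^ 2) μ := fun r =>
    ((hmaxsq r).const_mul α).add ((hmaxsq' r).const_mul β)
  set c := ∫ ω, max (X ω - t) 0 ∂μ with hc
  have hc0 : 0 ≤ c := integral_nonneg fun ω => le_max_right _ _
  have hcpos : 0 < c := by
    rcases hc0.lt_or_eq with hcp | hcz
    · exact hcp
    exfalso
    have hz : (fun ω => max (X ω - t) 0) =ᵐ[μ] 0 :=
      (integral_eq_zero_iff_of_nonneg (fun ω => le_max_right _ _) (hmax t)).1 hcz.symm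
    have hle : ∀ᵐ ω ∂μ, X ω ≤ t := hz.mono fun ω hω => by
      simp only [Pi.zero_apply] at hω
      have : X ω - t ≤ 0 := by
        by_contra hpos
        push_neg at hpos
        rw [max_eq_left hpos.le] at hω
        linarith
      linarith
    have hmt : m ≤ t := by
      have := integral_mono_ae hX1 (integrable_const t) hle
      simpa using this
    have hteq : t = m := le_antisymm hlt hmt
    have hint0 : ∫ ω, (t - X ω) ∂μ = 0 := by
      rw [integral_sub (integrable_const t) hX1]
      simp [← hm, hteq]
    have hz2 : (fun ω => t - X ω) =ᵐ[μ] 0 :=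
      (integral_eq_zero_iff_of_nonneg_ae (hle.mono fun ω hω => by
        simp only [Pi.zero_apply, Pi.sub_apply]; linarith)
        ((integrable_const t).sub hX1)).1 hint0
    exact hnc ⟨t, hz2.mono fun ω hω => by
      simp only [Pi.zero_apply] at hω; linarith⟩
  set h := (α - β) * c / α with hh
  have hhpos : 0 < h := div_pos (mul_pos (by linarith) hcpos) hα
  have hαh : α * h = (α - β) * c := by rw [hh, mul_div_assoc']; exact mul_div_cancel_left₀ _ hα.ne'
  -- pointwise comparison
  have hpt : ∀ ω, α * (max (X ω - (t + h)) 0) ^ 2 + β * (max ((t + h) - X ω) 0) ^ 2 ≤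
      (α * (max (X ω - t) 0) ^ 2 + β * (max (t - X ω) 0) ^ 2) + α * h ^ 2
        - 2 * β * h * (X ω - t) - 2 * (α - β) * h * (max (X ω - t) 0) := fun ω =>
    expectile_pt_ineq α β h (X ω) t hβ hαβ hhpos
  have hgint1 : Integrable (fun ω => (α * (max (X ω - t) 0) ^ 2 + β * (max (t - X ω) 0) ^ 2)
      + α * h ^ 2) μ := (hφint t).add (integrable_const _)
  have hgint2 : Integrable (fun ω => ((α * (max (X ω - t) 0) ^ 2 + β * (max (t - X ω) 0) ^ 2)
      + α * h ^ 2) - 2 * β * h * (X ω - t)) μ := hgint1.sub ((hsub t).const_mul _)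
  have hgint : Integrable (fun ω => (((α * (max (X ω - t) 0) ^ 2 + β * (max (t - X ω) 0) ^ 2)
      + α * h ^ 2) - 2 * β * h * (X ω - t)) - 2 * (α - β) * h * (max (X ω - t) 0)) μ :=
    hgint2.sub ((hmax t).const_mul _)
  have hcomp : φ (t + h) ≤ φ t + α * h ^ 2 - 2 * β * h * (m - t) - 2 * (α - β) * h * c := by
    rw [hφ (t + h)]
    have step1 : ∫ ω, (α * (max (X ω - (t + h)) 0) ^ 2 + β * (max ((t + h) - X ω) 0) ^ 2) ∂μ ≤
        ∫ ω, ((((α * (max (X ω - t) 0) ^ 2 + β * (max (t - X ω) 0) ^ 2)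
          + α * h ^ 2) - 2 * β * h * (X ω - t)) - 2 * (α - β) * h * (max (X ω - t) 0)) ∂μ :=
      integral_mono (hφint (t + h)) hgint (fun ω => by
        have := hpt ω; simp only; linarith)
    refine step1.trans_eq ?_
    rw [integral_sub hgint2 ((hmax t).const_mul _), integral_sub hgint1 ((hsub t).const_mul _),
      integral_add (hφint t) (integrable_const _), integral_const_mul, integral_const_mul,
      integral_sub hX1 (integrable_const t), hφ t]
    simp only [integral_const, measure_univ, probReal_univ, ENNReal.toReal_one, one_smul, smul_eq_mul, one_mul]
    rw [integral_const_mul, ← hc, ← hm]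
  have hkey : α * h ^ 2 - 2 * β * h * (m - t) - 2 * (α - β) * h * c < 0 := by
    have h1 : 2 * (α - β) * h * c = 2 * (α * h) * h := by rw [hαh]; ring
    have h2 : 0 ≤ m - t := by linarith
    nlinarith [mul_pos hβ (mul_pos hhpos (lt_of_le_of_lt (le_refl 0) hhpos)), mul_nonneg (mul_nonneg (by linarith : (0:ℝ) ≤ 2 * β) hhpos.le) h2, mul_pos hα (mul_pos hhpos hhpos)]
  have := ht (t + h)
  linarith
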